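/- Let Ŵ be Hermitian positive definite, X̂ Hermitian positive definite, and suppose Δ is a matrix such that Ŵ + X̂Δ + ΔᴴX̂ is singular. Then ‖Δ‖₂ ≥ αβ/2, where α² = λ_min(Ŵ) and β² = λ_min(X̂⁻¹ Ŵ X̂⁻¹). -/

import Mathlib

open Matrix
open scoped ComplexOrder

/-- The spectral norm (largest singular value) of a complex matrix. -/
noncomputable def specNorm {N : ℕ} (M : Matrix (Fin N) (Fin N) ℂ) : ℝ :=
  ‖Matrix.toEuclideanCLM (𝕜 := ℂ) M‖

/-- The smallest eigenvalue bounds the Rayleigh quotient from below. -/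
theorem quadLB {N : ℕ} {A : Matrix (Fin N) (Fin N) ℂ} (hA : A.IsHermitian) (v : Fin N → ℂ) :
    (⨅ i, hA.eigenvalues i) * (star v ⬝ᵥ v).re ≤ (star v ⬝ᵥ A *ᵥ v).re := by
  set c := ⨅ i, hA.eigenvalues i with hc
  have hle : ∀ i, c ≤ hA.eigenvalues i := fun i =>
    ciInf_le (Set.Finite.bddBelow (Set.finite_range _)) i
  have hps : ((A - (c : ℂ) • 1)).PosSemidef := by
    have hU := (Matrix.mem_unitaryGroup_iff).mp (hA.eigenvectorUnitary).2
    have key : A - (c : ℂ) • 1 =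
        (hA.eigenvectorUnitary : Matrix (Fin N) (Fin N) ℂ) *
          diagonal (fun i => ((hA.eigenvalues i - c : ℝ) : ℂ)) *
          ((hA.eigenvectorUnitary : Matrix (Fin N) (Fin N) ℂ))ᴴ := by
      conv_lhs => rw [hA.spectral_theorem]
      rw [← Matrix.star_eq_conjTranspose]
      have h1 : ((c : ℂ) • (1 : Matrix (Fin N) (Fin N) ℂ)) =
          (hA.eigenvectorUnitary : Matrix (Fin N) (Fin N) ℂ) * ((c:ℂ) • 1) *
            star (hA.eigenvectorUnitary : Matrix (Fin N) (Fin N) ℂ) := by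
        rw [Matrix.mul_smul, Matrix.smul_mul, mul_one, hU]
      rw [Unitary.conjStarAlgAut_apply, h1, ← Matrix.sub_mul, ← Matrix.mul_sub]
      congr 2
      ext i j
      by_cases h : i = j <;>
        simp [h, Matrix.diagonal_apply, Matrix.one_apply, Complex.ofReal_sub]
    rw [key, ← Matrix.star_eq_conjTranspose]
    have hd : PosSemidef (diagonal (fun i => ((hA.eigenvalues i - c : ℝ) : ℂ))) := by
      refine Matrix.PosSemidef.diagonal fun i => ?_
      simp only [Pi.zero_apply]
      rw [Complex.zero_le_real]
      linarith [hle i]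
    simpa [Matrix.star_eq_conjTranspose] using hd.mul_mul_conjTranspose_same
      (hA.eigenvectorUnitary : Matrix (Fin N) (Fin N) ℂ)
  have h0 := hps.dotProduct_mulVec_nonneg v
  have hre : 0 ≤ (star v ⬝ᵥ (A - (c : ℂ) • 1) *ᵥ v).re := by
    exact_mod_cast (Complex.le_def.mp h0).1
  rw [Matrix.sub_mulVec, dotProduct_sub, Matrix.smul_mulVec,
    Matrix.one_mulVec, dotProduct_smul] at hre
  simp only [Complex.sub_re, smul_eq_mul, Complex.mul_re, Complex.ofReal_re,
    Complex.ofReal_im, zero_mul] at hre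
  linarith

theorem stmt11 {N : ℕ} (What Xhat : Matrix (Fin N) (Fin N) ℂ)
    (hW : What.PosDef) (hX : Xhat.PosDef)
    (hH : (Xhat⁻¹ * What * Xhat⁻¹).IsHermitian)
    (Δ : Matrix (Fin N) (Fin N) ℂ)
    (hsing : (What + Xhat * Δ + Δᴴ * Xhat).det = 0) :
    Real.sqrt (⨅ i, hW.1.eigenvalues i) * Real.sqrt (⨅ i, hH.eigenvalues i) / 2 ≤
      specNorm Δ := by
  classical
  obtain ⟨v, hv, hvz⟩ := (Matrix.exists_mulVec_eq_zero_iff).mpr hsing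
  set u := Xhat *ᵥ v with hu
  set w := Δ *ᵥ v with hw
  set q := star v ⬝ᵥ What *ᵥ v with hq
  set z := star v ⬝ᵥ (Xhat * Δ) *ᵥ v with hz
  -- the quadratic form of the singular matrix vanishes
  have hsum : q + z + star z = 0 := by
    have hconj : star v ⬝ᵥ (Δᴴ * Xhat) *ᵥ v = star z := by
      have h1 : (Δᴴ * Xhat) = (Xhat * Δ)ᴴ := by
        rw [conjTranspose_mul, hX.1.eq]
      rw [h1, star_dotProduct, star_mulVec, conjTranspose_conjTranspose,
        ← dotProduct_mulVec]
    calc q + z + star z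
        = star v ⬝ᵥ (What + Xhat * Δ + Δᴴ * Xhat) *ᵥ v := by
          rw [Matrix.add_mulVec, Matrix.add_mulVec, dotProduct_add, dotProduct_add, hconj]
      _ = 0 := by rw [hvz, dotProduct_zero]
  -- isUnit of Xhat; v = Xhat⁻¹ *ᵥ u
  have hXdet : IsUnit Xhat.det := hX.det_pos.ne'.isUnit
  have hXinv : Xhat⁻¹ *ᵥ u = v := by
    rw [hu, Matrix.mulVec_mulVec, Matrix.nonsing_inv_mul _ hXdet, Matrix.one_mulVec]
  -- the H quadratic form on u equals q
  have hstar : star u ᵥ* Xhat⁻¹ = star v := by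
    have h2 : star (Xhat⁻¹ *ᵥ u) = star u ᵥ* (Xhat⁻¹)ᴴ := star_mulVec _ _
    rw [hXinv, hX.1.inv.eq] at h2
    exact h2.symm
  have hHq : star u ⬝ᵥ (Xhat⁻¹ * What * Xhat⁻¹) *ᵥ u = q := by
    have h1 : (Xhat⁻¹ * What * Xhat⁻¹) *ᵥ u = Xhat⁻¹ *ᵥ (What *ᵥ v) := by
      rw [← Matrix.mulVec_mulVec, hXinv, ← Matrix.mulVec_mulVec]
    rw [h1, dotProduct_mulVec, hstar, hq]
  -- z as an inner product
  have hzu : z = star u ⬝ᵥ w := by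
    rw [hz, ← Matrix.mulVec_mulVec, ← hw, dotProduct_mulVec]
    congr 1
    rw [hu, star_mulVec, hX.1.eq]
  -- Euclidean space setup
  set e : (Fin N → ℂ) → EuclideanSpace ℂ (Fin N) := fun x => (WithLp.equiv 2 _).symm x with he
  have hinner : ∀ x y : Fin N → ℂ, inner (𝕜 := ℂ) (e x) (e y) = star x ⬝ᵥ y := fun x y =>
    dotProduct_comm y (star x)
  have hnormsq : ∀ x : Fin N → ℂ, (star x ⬝ᵥ x).re = ‖e x‖ ^ 2 := fun x => by
    rw [← hinner x x]
    have := inner_self_eq_norm_sq (𝕜 := ℂ) (e x)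
    simpa [RCLike.re_to_complex] using this
  set sv := ‖e v‖ with hsv
  set su := ‖e u‖ with hsu
  set d := specNorm Δ with hd
  have hd0 : 0 ≤ d := norm_nonneg _
  have hsv0 : 0 < sv := by
    rw [hsv, norm_pos_iff]
    intro h
    exact hv ((WithLp.equiv 2 _).symm.injective (h.trans rfl))
  have hsu0 : 0 < su := by
    rw [hsu, norm_pos_iff]
    intro h
    apply hv
    have h4 : u = 0 := (WithLp.equiv 2 _).symm.injective (h.trans rfl)
    rw [← hXinv, h4, Matrix.mulVec_zero]
  -- operator norm bound
  have hwb : ‖e w‖ ≤ d * sv := by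
    have : e w = Matrix.toEuclideanCLM (𝕜 := ℂ) Δ (e v) := by
      rw [he]
      simp only [WithLp.equiv_symm_apply, Matrix.toEuclideanCLM_toLp, hw]
    rw [this]
    exact (Matrix.toEuclideanCLM (𝕜 := ℂ) Δ).le_opNorm (e v)
  -- Cauchy-Schwarz
  have hzb : ‖z‖ ≤ su * (d * sv) := by
    have h1 : ‖z‖ = ‖inner (𝕜 := ℂ) (e u) (e w)‖ := by
      rw [hinner, hzu]
    rw [h1]
    calc ‖inner (𝕜 := ℂ) (e u) (e w)‖ ≤ ‖e u‖ * ‖e w‖ := norm_inner_le_norm _ _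
      _ ≤ su * (d * sv) := by
          exact mul_le_mul_of_nonneg_left hwb (norm_nonneg _)
  -- Q := q.re
  set Q := q.re with hQ
  have hQpos : 0 < Q := by
    have := hW.dotProduct_mulVec_pos hv
    exact_mod_cast (Complex.lt_def.mp this).1
  have hQle : Q ≤ 2 * (su * (d * sv)) := by
    have hre : Q = -(2 * z.re) := by
      have h := congrArg Complex.re hsum
      simp only [Complex.add_re, Complex.zero_re, Complex.star_def, Complex.conj_re] at h
      rw [hQ]; linarith
    have h2 : -(2 * z.re) ≤ 2 * ‖z‖ := by
      have := Complex.abs_re_le_norm z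
      have h3 := neg_abs_le z.re
      nlinarith [norm_nonneg z]
    linarith [mul_le_mul_of_nonneg_left hzb (by norm_num : (0:ℝ) ≤ 2), hre]
  -- eigenvalue bounds
  set a := ⨅ i, hW.1.eigenvalues i with ha
  set b := ⨅ i, hH.eigenvalues i with hb
  have ha0 : 0 ≤ a := Real.iInf_nonneg fun i => (hW.eigenvalues_pos i).le
  have hHps : (Xhat⁻¹ * What * Xhat⁻¹).PosSemidef := by
    have h1 : Xhat⁻¹ * What * Xhat⁻¹ = Xhat⁻¹ * What * (Xhat⁻¹)ᴴ := by rw [hX.1.inv.eq]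
    rw [h1]
    exact hW.posSemidef.mul_mul_conjTranspose_same Xhat⁻¹
  have hb0 : 0 ≤ b := Real.iInf_nonneg fun i => hHps.eigenvalues_nonneg i
  have hQa : a * sv ^ 2 ≤ Q := by
    have := quadLB hW.1 v
    rwa [hnormsq v] at this
  have hQb : b * su ^ 2 ≤ Q := by
    have := quadLB hH u
    rwa [hnormsq u, hHq] at this
  -- combine via square roots
  have hsa : Real.sqrt a * sv ≤ Real.sqrt Q := by
    have := Real.sqrt_le_sqrt hQa
    rwa [Real.sqrt_mul ha0, Real.sqrt_sq hsv0.le] at this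
  have hsb : Real.sqrt b * su ≤ Real.sqrt Q := by
    have := Real.sqrt_le_sqrt hQb
    rwa [Real.sqrt_mul hb0, Real.sqrt_sq hsu0.le] at this
  have hmul : (Real.sqrt a * sv) * (Real.sqrt b * su) ≤ Q := by
    calc (Real.sqrt a * sv) * (Real.sqrt b * su) ≤ Real.sqrt Q * Real.sqrt Q :=
          mul_le_mul hsa hsb (by positivity) (Real.sqrt_nonneg _)
      _ = Q := Real.mul_self_sqrt hQpos.le
  have hfinal : Real.sqrt a * Real.sqrt b * (sv * su) ≤ 2 * d * (sv * su) := by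
    nlinarith [hmul, hQle]
  have h2 : Real.sqrt a * Real.sqrt b ≤ 2 * d :=
    le_of_mul_le_mul_right hfinal (by positivity)
  linarith
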